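/- Let ω be a regular acoustic dispersion relation. There is a constant C₃ such that for all ε > 0, p ∈ ℝ³, and k with ‖k‖_∞ ≤ 1/2 and |k| > ε|p|, one has |ω(k + εp/2) − ω(k − εp/2) − εp·∇ω(k)| ≤ C₃ ε² |p|²/|k|. -/

import Mathlib

noncomputable section

abbrev E3 : Type := EuclideanSpace ℝ (Fin 3)

/-- A lattice vector of ℤ³ inside ℝ³, used to express periodicity over the torus 𝕋³ = ℝ³/ℤ³. -/
def latticeVec (m : Fin 3 → ℤ) : E3 := WithLp.toLp 2 (fun i => (m i : ℝ))

/-- The Hessian matrix of `f` at `x`. -/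
def hess (f : E3 → ℝ) (x : E3) : Matrix (Fin 3) (Fin 3) ℝ :=
  Matrix.of fun i j => iteratedFDeriv ℝ 2 f x ![EuclideanSpace.single i 1, EuclideanSpace.single j 1]

lemma coord_le_norm (x : E3) (i : Fin 3) : |x i| ≤ ‖x‖ := by
  rw [EuclideanSpace.norm_eq, ← Real.sqrt_sq (abs_nonneg (x i))]
  apply Real.sqrt_le_sqrt
  calc |x i|^2 = ‖x i‖^2 := by rw [Real.norm_eq_abs]
    _ ≤ ∑ j, ‖x j‖^2 := Finset.single_le_sum (f := fun j => ‖x j‖^2)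
        (fun j _ => sq_nonneg _) (Finset.mem_univ i)

lemma normsq_le_of_coords {x : E3} {c : ℝ} (h : ∀ i, |x i| ≤ c) : ‖x‖^2 ≤ 3 * c^2 := by
  have h0 : (0:ℝ) ≤ c := le_trans (abs_nonneg _) (h 0)
  have := EuclideanSpace.norm_eq x
  have hn : ‖x‖^2 = ∑ j, ‖x j‖^2 := by
    rw [this, Real.sq_sqrt]
    positivity
  rw [hn, Fin.sum_univ_three]
  have := fun i => sq_le_sq' (neg_le_of_abs_le (h i)) (le_of_abs_le (h i))
  simp only [Real.norm_eq_abs, sq_abs]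
  nlinarith [this 0, this 1, this 2]

lemma sum_single_eq (x : E3) : ∑ i, x i • EuclideanSpace.single i (1:ℝ) = x := by
  ext j
  rw [Fin.sum_univ_three]
  simp [EuclideanSpace.single_apply]
  fin_cases j <;> simp

lemma omega_pos (ω : E3 → ℝ)
    (hper : ∀ (k : E3) (m : Fin 3 → ℤ), ω (k + latticeVec m) = ω k)
    (hreg : ∀ k : E3, k ≠ 0 → (∀ i, |k i| ≤ 1 / 2) → 0 < ω k) :
    ∀ x : E3, x ≠ 0 → (∀ i, |x i| ≤ 19/20) → 0 < ω x := by
  intro x hx hxc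
  set m : Fin 3 → ℤ := fun i => round (x i) with hm
  set y : E3 := x - latticeVec m with hy
  have hxy : x = y + latticeVec m := by simp [hy]
  have hyc : ∀ i, |y i| ≤ 1/2 := by
    intro i
    have : y i = x i - round (x i) := by simp [hy, latticeVec, hm]
    rw [this]
    exact abs_sub_round (x i)
  have hyne : y ≠ 0 := by
    intro h
    apply hx
    have hxl : x = latticeVec m := by rw [hxy, h, zero_add]
    have : ∀ i, x i = 0 := by
      intro i
      have h1 : x i = (m i : ℝ) := by rw [hxl]; rfl
      have h2 : |(m i : ℝ)| ≤ 19/20 := h1 ▸ hxc i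
      have : m i = 0 := by
        by_contra hne
        have : (1:ℝ) ≤ |(m i : ℝ)| := by
          rw [← Int.cast_abs]
          exact_mod_cast Int.one_le_abs hne
        linarith
      rw [h1, this]; norm_num
    ext i; exact this i
  rw [hxy, hper]
  exact hreg y hyne hyc

lemma taylor2_bound (lam : E3 → ℝ) (hs : ContDiff ℝ 3 lam) (h0 : lam 0 = 0)
    (hd0 : fderiv ℝ lam 0 = 0) {η : ℝ} (hη : 0 < η) :
    ∃ r > 0, ∀ y : E3, ‖y‖ ≤ r →
      |lam y - (1/2) * fderiv ℝ (fderiv ℝ lam) 0 y y| ≤ η * ‖y‖^2 := by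
  set H := fderiv ℝ (fderiv ℝ lam) 0 with hH
  have hsym : ∀ a b, H a b = H b a := by
    intro a b
    exact (hs.contDiffAt.isSymmSndFDerivAt (by norm_num)) a b
  have hd1 : ContDiff ℝ 2 (fderiv ℝ lam) := hs.fderiv_right (by norm_num)
  have hder : HasFDerivAt (fderiv ℝ lam) H 0 :=
    (hd1.differentiable (by norm_num) 0).hasFDerivAt
  have hlo := hder.isLittleO
  rw [Asymptotics.isLittleO_iff] at hlo
  have hev := hlo (c := η) hη
  rw [Metric.eventually_nhds_iff] at hev
  obtain ⟨r', hr', hball⟩ := hev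
  refine ⟨r'/2, by positivity, ?_⟩
  intro y hy
  -- bound ‖fderiv lam z - H z‖ ≤ η ‖z‖ for ‖z‖ ≤ r'/2
  have key : ∀ z : E3, ‖z‖ ≤ r'/2 → ‖fderiv ℝ lam z - H z‖ ≤ η * ‖z‖ := by
    intro z hz
    have hd : dist z 0 < r' := by
      rw [dist_zero_right]; linarith
    have := hball hd
    simpa [hd0] using this
  -- MVT on closedBall 0 ‖y‖ for ψ w = lam w - (1/2) H w w
  set ψ : E3 → ℝ := fun w => lam w - (1/2) * H w w with hψ
  have hψ0 : ψ 0 = 0 := by simp [hψ, h0]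
  have hder' : ∀ z : E3, HasFDerivAt ψ (fderiv ℝ lam z - H z) z := by
    intro z
    have h1 : HasFDerivAt lam (fderiv ℝ lam z) z :=
      (hs.differentiable (by norm_num) z).hasFDerivAt
    have h2 : HasFDerivAt (fun w : E3 => H w w)
        ((H.precompR E3 z (ContinuousLinearMap.id ℝ E3)) +
          (H.precompL E3 (ContinuousLinearMap.id ℝ E3) z)) z :=
      H.hasFDerivAt_of_bilinear (hasFDerivAt_id z) (hasFDerivAt_id z)
    have h3 := h1.sub (h2.const_mul (1/2))
    refine h3.congr_fderiv ?_
    ext v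
    simp [ContinuousLinearMap.precompR, ContinuousLinearMap.precompL, hsym z v]
    ring
  have := Convex.norm_image_sub_le_of_norm_hasFDerivWithin_le
    (f := ψ) (f' := fun z => fderiv ℝ lam z - H z) (C := η * ‖y‖)
    (s := Metric.closedBall (0:E3) ‖y‖)
    (fun z _ => (hder' z).hasFDerivWithinAt)
    (by
      intro z hz
      rw [Metric.mem_closedBall, dist_zero_right] at hz
      exact le_trans (key z (le_trans hz hy)) (by nlinarith [norm_nonneg y]))
    (convex_closedBall _ _)
    (Metric.mem_closedBall_self (norm_nonneg y))
    (by rw [Metric.mem_closedBall, dist_zero_right])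
  rw [hψ0, sub_zero, sub_zero] at this
  calc |ψ y| = ‖ψ y‖ := rfl
    _ ≤ η * ‖y‖ * ‖y‖ := this
    _ = η * ‖y‖^2 := by ring

set_option maxHeartbeats 1000000 in
lemma psdH (lam : E3 → ℝ) (hs : ContDiff ℝ 3 lam) (h0 : lam 0 = 0)
    (hd0 : fderiv ℝ lam 0 = 0) (hnn : ∀ x, 0 ≤ lam x) :
    ∀ x : E3, 0 ≤ fderiv ℝ (fderiv ℝ lam) 0 x x := by
  set H := fderiv ℝ (fderiv ℝ lam) 0 with hH
  intro x
  by_contra hneg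
  push_neg at hneg
  have hx0 : x ≠ 0 := by
    intro h; rw [h] at hneg; simp at hneg
  have hxn : 0 < ‖x‖ := norm_pos_iff.mpr hx0
  set η : ℝ := (-(H x x)) / (4 * ‖x‖^2) with hηdef
  have hη : 0 < η := by
    apply div_pos (by linarith) (by positivity)
  obtain ⟨r, hr, hT⟩ := taylor2_bound lam hs h0 hd0 hη
  set t : ℝ := r / ‖x‖ with ht
  have htpos : 0 < t := div_pos hr hxn
  set y : E3 := t • x with hy
  have hyn : ‖y‖ = r := by
    rw [hy, norm_smul, Real.norm_eq_abs, abs_of_pos htpos, ht]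
    field_simp
  have hTy := hT y (le_of_eq hyn)
  have hHyy : H y y = t^2 * H x x := by
    rw [hy]
    simp only [map_smul, ContinuousLinearMap.smul_apply, smul_eq_mul]
    ring
  have hnny := hnn y
  rw [hHyy] at hTy
  rw [hyn] at hTy
  have hr2 : r^2 = t^2 * ‖x‖^2 := by rw [ht]; field_simp
  rw [hr2] at hTy
  have habs := abs_le.mp hTy
  have h1 : lam y - 1/2 * (t^2 * H x x) ≤ η * (t^2 * ‖x‖^2) := habs.2
  have h2 : 1/2 * (t ^ 2 * H x x) ≥ lam y - η * (t^2 * ‖x‖^2) := by linarith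
  have hηx : η * (t^2 * ‖x‖^2) = t^2 * (-(H x x)/4) := by
    rw [hηdef]; field_simp
  rw [hηx] at h2
  have htt : 0 < t * t := mul_pos htpos htpos
  nlinarith [hnny, htt, hneg]

set_option maxHeartbeats 1000000 in
lemma posdefH (lam : E3 → ℝ)
    (hinv : IsUnit (hess lam 0).det)
    (hpsd : ∀ x : E3, 0 ≤ fderiv ℝ (fderiv ℝ lam) 0 x x)
    (hsym : ∀ a b : E3, fderiv ℝ (fderiv ℝ lam) 0 a b = fderiv ℝ (fderiv ℝ lam) 0 b a) :
    ∃ c > 0, ∀ x : E3, c * ‖x‖^2 ≤ fderiv ℝ (fderiv ℝ lam) 0 x x := by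
  set H := fderiv ℝ (fderiv ℝ lam) 0 with hH
  -- step 1: H x x = 0 → x = 0
  have hnondeg : ∀ x : E3, H x x = 0 → x = 0 := by
    intro x hxx
    have claim1 : ∀ y : E3, ¬ (H x y < 0) := by
      intro y hy
      set a := H x y with ha
      set b := H y y with hb
      set t : ℝ := min 1 ((-a) / (|b| + 1)) with htdef
      have habs : 0 ≤ |b| := abs_nonneg b
      have htpos : 0 < t := by
        apply lt_min one_pos
        apply div_pos (by linarith) (by linarith)
      have hexp : H (x + t • y) (x + t • y) = 2 * t * a + t^2 * b := by
        simp only [map_add, map_smul, ContinuousLinearMap.add_apply,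
          ContinuousLinearMap.smul_apply, smul_eq_mul, ha, hb]
        rw [hxx, hsym y x]
        ring
      have hpos := hpsd (x + t • y)
      rw [hexp] at hpos
      have htb : t * b < -a := by
        have h1 : t ≤ (-a) / (|b| + 1) := min_le_right _ _
        have h2 : t * b ≤ t * |b| := by
          apply mul_le_mul_of_nonneg_left (le_abs_self b) (le_of_lt htpos)
        have h3 : t * |b| ≤ ((-a)/(|b|+1)) * |b| :=
          mul_le_mul_of_nonneg_right h1 habs
        have h4 : ((-a)/(|b|+1)) * |b| < -a := by
          rw [div_mul_eq_mul_div, div_lt_iff₀ (by linarith)]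
          nlinarith
        linarith
      nlinarith [mul_pos htpos htpos]
    have claim2 : ∀ y : E3, H x y = 0 := by
      intro y
      rcases lt_trichotomy (H x y) 0 with h | h | h
      · exact absurd h (claim1 y)
      · exact h
      · exfalso
        apply claim1 (-y)
        rw [map_neg]
        simpa using h
    -- vecMul
    by_contra hxne
    have hvm : Matrix.vecMul (fun i => x i) (hess lam 0) = 0 := by
      funext j
      show ∑ i, x i * hess lam 0 i j = 0
      have hA : ∀ i, hess lam 0 i j = H (EuclideanSpace.single i 1) (EuclideanSpace.single j 1) := by
        intro i
        show iteratedFDeriv ℝ 2 lam 0 ![_, _] = _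
        rw [iteratedFDeriv_two_apply]
        simp
        rfl
      have : ∑ i, x i * hess lam 0 i j
          = H (∑ i, x i • EuclideanSpace.single i (1:ℝ)) (EuclideanSpace.single j 1) := by
        rw [map_sum]
        rw [ContinuousLinearMap.sum_apply]
        congr 1
        funext i
        rw [hA i, map_smul, ContinuousLinearMap.smul_apply, smul_eq_mul]
      rw [this, sum_single_eq, claim2]
    have hdet : (hess lam 0).det ≠ 0 := isUnit_iff_ne_zero.mp hinv
    have := Matrix.eq_zero_of_vecMul_eq_zero hdet hvm
    apply hxne
    ext i
    exact congrFun this i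
  -- step 2: min on the sphere
  have hcontH : Continuous fun x : E3 => H x x :=
    H.continuous.clm_apply continuous_id
  have hsne : (Metric.sphere (0:E3) 1).Nonempty :=
    NormedSpace.sphere_nonempty.mpr (by norm_num)
  obtain ⟨x₀, hx₀S, hmin⟩ := (isCompact_sphere (0:E3) 1).exists_isMinOn hsne
    (hcontH.continuousOn)
  have hx₀n : ‖x₀‖ = 1 := by simpa using hx₀S
  have hx₀ne : x₀ ≠ 0 := by
    intro h; rw [h] at hx₀n; simp at hx₀n
  set c := H x₀ x₀ with hc
  have hcpos : 0 < c := by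
    rcases lt_or_eq_of_le (hpsd x₀) with h | h
    · exact h
    · exact absurd (hnondeg x₀ h.symm) hx₀ne
  refine ⟨c, hcpos, ?_⟩
  intro x
  rcases eq_or_ne x 0 with rfl | hxne
  · simp
  · have hxn : 0 < ‖x‖ := norm_pos_iff.mpr hxne
    set y : E3 := ‖x‖⁻¹ • x with hy
    have hyS : y ∈ Metric.sphere (0:E3) 1 := by
      simp [hy, norm_smul, abs_of_pos (inv_pos.mpr hxn), inv_mul_cancel₀ (ne_of_gt hxn)]
    have hmy := hmin hyS
    have hHyy : H y y = ‖x‖⁻¹ * (‖x‖⁻¹ * H x x) := by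
      rw [hy]
      simp only [map_smul, ContinuousLinearMap.smul_apply, smul_eq_mul]
    have : c ≤ ‖x‖⁻¹ * (‖x‖⁻¹ * H x x) := by
      rw [← hHyy]; exact hmy
    have h2 := mul_le_mul_of_nonneg_left this (le_of_lt (mul_pos hxn hxn))
    calc c * ‖x‖^2 = ‖x‖ * ‖x‖ * c := by ring
      _ ≤ ‖x‖ * ‖x‖ * (‖x‖⁻¹ * (‖x‖⁻¹ * H x x)) := h2
      _ = H x x := by field_simp

lemma quad_lower (lam : E3 → ℝ)
    (hT : ∀ {η : ℝ}, 0 < η → ∃ r > 0, ∀ y : E3, ‖y‖ ≤ r →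
      |lam y - (1/2) * fderiv ℝ (fderiv ℝ lam) 0 y y| ≤ η * ‖y‖^2)
    (hc : ∃ c > 0, ∀ x : E3, c * ‖x‖^2 ≤ fderiv ℝ (fderiv ℝ lam) 0 x x)
    (hlamcont : Continuous lam)
    (hpos : ∀ x : E3, x ≠ 0 → (∀ i, |x i| ≤ 19/20) → 0 < lam x) :
    ∃ c₁ > 0, ∀ x : E3, (∀ i, |x i| ≤ 19/20) → c₁ * ‖x‖^2 ≤ lam x := by
  obtain ⟨c, hcpos, hcquad⟩ := hc
  obtain ⟨r, hr, hTr⟩ := hT (show (0:ℝ) < c/4 by linarith)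
  have hsmall : ∀ y : E3, ‖y‖ ≤ r → (c/4) * ‖y‖^2 ≤ lam y := by
    intro y hy
    have h1 := abs_le.mp (hTr y hy)
    have h2 := hcquad y
    nlinarith [h1.1]
  set K : Set E3 := {x | r ≤ ‖x‖ ∧ ∀ i, |x i| ≤ 19/20} with hK
  have hKclosed : IsClosed K := by
    have h1 : IsClosed {x : E3 | r ≤ ‖x‖} := isClosed_le continuous_const continuous_norm
    have h2 : IsClosed {x : E3 | ∀ i, |x i| ≤ 19/20} := by
      have : {x : E3 | ∀ i, |x i| ≤ 19/20} = ⋂ i, {x : E3 | |x i| ≤ 19/20} := by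
        ext x; simp
      rw [this]
      apply isClosed_iInter
      intro i
      exact isClosed_le ((EuclideanSpace.proj (𝕜 := ℝ) i).continuous.abs) continuous_const
    exact h1.inter h2
  have hKbdd : Bornology.IsBounded K := by
    apply Bornology.IsBounded.subset (Metric.isBounded_closedBall (x := (0:E3)) (r := 2))
    intro x hx
    rw [Metric.mem_closedBall, dist_zero_right]
    have := normsq_le_of_coords hx.2
    nlinarith [norm_nonneg x]
  have hKcompact : IsCompact K := Metric.isCompact_of_isClosed_isBounded hKclosed hKbdd
  rcases Set.eq_empty_or_nonempty K with hKe | hKne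
  · refine ⟨c/4, by linarith, ?_⟩
    intro x hxc
    rcases le_or_gt ‖x‖ r with h | h
    · exact hsmall x h
    · exfalso
      have : x ∈ K := ⟨le_of_lt h, hxc⟩
      rw [hKe] at this
      exact this
  · obtain ⟨x₀, hx₀K, hmin⟩ := hKcompact.exists_isMinOn hKne hlamcont.continuousOn
    set m₀ := lam x₀ with hm₀
    have hm₀pos : 0 < m₀ := by
      apply hpos x₀ _ hx₀K.2
      intro h
      have := hx₀K.1
      rw [h] at this
      simp at this
      linarith
    refine ⟨min (c/4) (m₀/3), lt_min (by linarith) (by linarith), ?_⟩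
    intro x hxc
    rcases le_or_gt ‖x‖ r with h | h
    · calc min (c/4) (m₀/3) * ‖x‖^2 ≤ (c/4) * ‖x‖^2 := by
            apply mul_le_mul_of_nonneg_right (min_le_left _ _) (sq_nonneg _)
        _ ≤ lam x := hsmall x h
    · have hxK : x ∈ K := ⟨le_of_lt h, hxc⟩
      have hsq : ‖x‖^2 ≤ 3 := by
        have := normsq_le_of_coords hxc
        nlinarith
      calc min (c/4) (m₀/3) * ‖x‖^2 ≤ (m₀/3) * ‖x‖^2 := by
            apply mul_le_mul_of_nonneg_right (min_le_right _ _) (sq_nonneg _)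
        _ ≤ (m₀/3) * 3 := by
            apply mul_le_mul_of_nonneg_left hsq (by linarith)
        _ = m₀ := by ring
        _ ≤ lam x := hmin hxK

set_option maxHeartbeats 2000000 in
/-- For a regular acoustic dispersion relation ω there is C₃ such that for ε > 0, p ∈ ℝ³ and
‖k‖_∞ ≤ 1/2 with |k| > ε|p| one has
|ω(k + εp/2) − ω(k − εp/2) − εp·∇ω(k)| ≤ C₃ ε²|p|²/|k|. -/
theorem stmt5 (ω : E3 → ℝ)
    (hcont : Continuous ω)
    (hnonneg : ∀ k, 0 ≤ ω k)
    (hper : ∀ (k : E3) (m : Fin 3 → ℤ), ω (k + latticeVec m) = ω k)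
    (hsmooth : ContDiff ℝ 3 (fun k => (ω k) ^ 2))
    (h0 : ω 0 = 0)
    (hinv : IsUnit (hess (fun k => (ω k) ^ 2) 0).det)
    (hreg : ∀ k : E3, k ≠ 0 → (∀ i, |k i| ≤ 1 / 2) → 0 < ω k) :
    ∃ C₃ : ℝ, ∀ ε : ℝ, 0 < ε → ∀ p k : E3, (∀ i, |k i| ≤ 1 / 2) → ε * ‖p‖ < ‖k‖ →
      |ω (k + (ε / 2) • p) - ω (k - (ε / 2) • p) - ε * fderiv ℝ ω k p| ≤
        C₃ * ε ^ 2 * ‖p‖ ^ 2 / ‖k‖ := by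
  set lam : E3 → ℝ := fun x => ω x ^ 2 with hlamdef
  have hωeq : ω = fun y => Real.sqrt (lam y) := by
    funext y; rw [hlamdef]; exact (Real.sqrt_sq (hnonneg y)).symm
  -- quadratic lower bound
  have hlam0 : lam 0 = 0 := by simp [hlamdef, h0]
  have hd0 : fderiv ℝ lam 0 = 0 := by
    apply IsLocalMin.fderiv_eq_zero
    apply Filter.Eventually.of_forall
    intro x
    have h2 : 0 ≤ lam x := sq_nonneg (ω x)
    linarith
  have hsym : ∀ a b : E3, fderiv ℝ (fderiv ℝ lam) 0 a b = fderiv ℝ (fderiv ℝ lam) 0 b a :=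
    fun a b => (hsmooth.contDiffAt.isSymmSndFDerivAt (by norm_num)) a b
  have hpsd := psdH lam hsmooth hlam0 hd0 (fun x => sq_nonneg (ω x))
  have hpd := posdefH lam hinv hpsd hsym
  have hωpos := omega_pos ω hper hreg
  have hlampos : ∀ x : E3, x ≠ 0 → (∀ i, |x i| ≤ 19/20) → 0 < lam x :=
    fun x hx hc => pow_pos (hωpos x hx hc) 2
  obtain ⟨c₁, hc₁, hquad⟩ := quad_lower lam
    (fun hη => taylor2_bound lam hsmooth hlam0 hd0 hη) hpd (hcont.pow 2) hlampos
  -- smoothness facts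
  have hdiff : Differentiable ℝ lam := hsmooth.differentiable (by norm_num)
  have hd1 : ContDiff ℝ 2 (fderiv ℝ lam) := hsmooth.fderiv_right (by norm_num)
  have hdiff2 : Differentiable ℝ (fderiv ℝ lam) := hd1.differentiable (by norm_num)
  have hcont2 : Continuous (fderiv ℝ (fderiv ℝ lam)) := hd1.continuous_fderiv (by norm_num)
  -- bound on second derivative on ball of radius 2
  obtain ⟨M0, hM0⟩ := (isCompact_closedBall (0:E3) 2).exists_bound_of_continuousOn
    (f := fderiv ℝ (fderiv ℝ lam)) hcont2.continuousOn
  set M := max M0 1 with hMdef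
  have hMpos : (0:ℝ) < M := lt_of_lt_of_le one_pos (le_max_right _ _)
  have hM : ∀ x ∈ Metric.closedBall (0:E3) 2, ‖fderiv ℝ (fderiv ℝ lam) x‖ ≤ M :=
    fun x hx => le_trans (hM0 x hx) (le_max_left _ _)
  -- gradient bound
  have hgrad : ∀ x ∈ Metric.closedBall (0:E3) 2, ‖fderiv ℝ lam x‖ ≤ M * ‖x‖ := by
    intro x hx
    have := Convex.norm_image_sub_le_of_norm_fderiv_le
      (f := fderiv ℝ lam) (C := M) (s := Metric.closedBall (0:E3) 2)
      (fun z _ => hdiff2 z) (fun z hz => hM z hz) (convex_closedBall _ _)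
      (Metric.mem_closedBall_self (by norm_num)) hx
    simpa [hd0] using this
  set a : ℝ := Real.sqrt c₁ / 2 with hadef
  have ha : 0 < a := by
    apply div_pos (Real.sqrt_pos.mpr hc₁) two_pos
  set C₄ : ℝ := M/(8*a) + 9*M^2/(64*a^3) with hC₄def
  refine ⟨2*C₄, ?_⟩
  intro ε hε p k hk hlt
  rw [hωeq]
  have hkpos : 0 < ‖k‖ := lt_of_le_of_lt (by positivity) hlt
  have hk9 : ‖k‖ ≤ 9/10 := by
    have := normsq_le_of_coords hk
    nlinarith [norm_nonneg k]
  set u : E3 := (2:ℝ)⁻¹ • p with hudef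
  have hu : ‖u‖ = ‖p‖/2 := by
    rw [hudef, norm_smul]
    simp [abs_of_pos]
    ring
  set x : ℝ → E3 := fun s => k + s • u with hxdef
  set ell : ℝ → ℝ := fun s => lam (x s) with helldef
  set L1 : ℝ → ℝ := fun s => fderiv ℝ lam (x s) u with hL1def
  set L2 : ℝ → ℝ := fun s => fderiv ℝ (fderiv ℝ lam) (x s) u u with hL2def
  -- region facts
  have hreg1 : ∀ s : ℝ, |s| ≤ ε → ‖k‖/2 ≤ ‖x s‖ ∧ ‖x s‖ ≤ (3/2)*‖k‖ ∧ (∀ i, |x s i| ≤ 19/20) := by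
    intro s hs
    have hsu : ‖s • u‖ ≤ ε * ‖p‖ / 2 := by
      rw [norm_smul, Real.norm_eq_abs, hu]
      calc |s| * (‖p‖/2) ≤ ε * (‖p‖/2) := by
            apply mul_le_mul_of_nonneg_right hs (by positivity)
        _ = ε * ‖p‖/2 := by ring
    constructor
    · calc ‖k‖/2 = ‖k‖ - ‖k‖/2 := by ring
        _ ≤ ‖k‖ - ε*‖p‖/2 := by linarith
        _ ≤ ‖k‖ - ‖s • u‖ := by linarith
        _ ≤ ‖k + s • u‖ := by
            have h5 : ‖k‖ ≤ ‖k + s • u‖ + ‖s • u‖ := by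
              calc ‖k‖ = ‖(k + s • u) - s • u‖ := by congr 1; abel
                _ ≤ ‖k + s • u‖ + ‖s • u‖ := norm_sub_le _ _
            linarith
    constructor
    · calc ‖k + s • u‖ ≤ ‖k‖ + ‖s • u‖ := norm_add_le _ _
        _ ≤ ‖k‖ + ε*‖p‖/2 := by linarith
        _ ≤ ‖k‖ + ‖k‖/2 := by linarith
        _ = (3/2)*‖k‖ := by ring
    · intro i
      have h1 : (x s) i = k i + (s • u) i := rfl
      have h2 : |(s • u) i| ≤ ε * ‖p‖/2 := le_trans (coord_le_norm (s • u) i) hsu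
      have h3 : |k i| ≤ 1/2 := hk i
      have h4 : ε * ‖p‖/2 ≤ ‖k‖/2 := by linarith
      calc |(x s) i| ≤ |k i| + |(s • u) i| := by rw [h1]; exact abs_add_le _ _
        _ ≤ 1/2 + ‖k‖/2 := by linarith
        _ ≤ 1/2 + 9/20 := by linarith
        _ = 19/20 := by norm_num
  have hball : ∀ s : ℝ, |s| ≤ ε → x s ∈ Metric.closedBall (0:E3) 2 := by
    intro s hs
    rw [Metric.mem_closedBall, dist_zero_right]
    have := (hreg1 s hs).2.1
    linarith
  have helllow : ∀ s : ℝ, |s| ≤ ε → (a*‖k‖)^2 ≤ ell s := by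
    intro s hs
    have h1 := hquad (x s) (hreg1 s hs).2.2
    have h2 := (hreg1 s hs).1
    have h3 : (a*‖k‖)^2 = c₁ * (‖k‖/2)^2 := by
      have hc' : Real.sqrt c₁ ^ 2 = c₁ := Real.sq_sqrt (le_of_lt hc₁)
      rw [hadef]
      linear_combination (‖k‖^2/4) * hc'
    rw [h3]
    calc c₁ * (‖k‖/2)^2 ≤ c₁ * ‖x s‖^2 := by
          apply mul_le_mul_of_nonneg_left _ (le_of_lt hc₁)
          nlinarith [norm_nonneg (x s), hkpos]
      _ ≤ lam (x s) := h1
  have hellpos : ∀ s : ℝ, |s| ≤ ε → 0 < ell s := by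
    intro s hs
    exact lt_of_lt_of_le (by positivity) (helllow s hs)
  -- sqrt lower bound
  have hsqrt : ∀ s : ℝ, |s| ≤ ε → a*‖k‖ ≤ Real.sqrt (ell s) := by
    intro s hs
    have := Real.sqrt_le_sqrt (helllow s hs)
    rwa [Real.sqrt_sq (by positivity)] at this
  -- derivative chain
  have hx' : ∀ s : ℝ, HasDerivAt x u s := by
    intro s
    have h1 : HasDerivAt (fun s : ℝ => s • u) ((1:ℝ) • u) s := (hasDerivAt_id s).smul_const u
    rw [one_smul] at h1
    exact h1.const_add k
  have hell' : ∀ s : ℝ, HasDerivAt ell (L1 s) s := by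
    intro s
    exact (hdiff (x s)).hasFDerivAt.comp_hasDerivAt s (hx' s)
  have hL1' : ∀ s : ℝ, HasDerivAt L1 (L2 s) s := by
    intro s
    have h1 : HasDerivAt (fun t => fderiv ℝ lam (x t)) (fderiv ℝ (fderiv ℝ lam) (x s) u) s :=
      (hdiff2 (x s)).hasFDerivAt.comp_hasDerivAt s (hx' s)
    have h2 := (ContinuousLinearMap.apply ℝ ℝ u).hasFDerivAt.comp_hasDerivAt s h1
    exact h2
  -- f and g
  set f : ℝ → ℝ := fun s => Real.sqrt (ell s) with hfdef
  set g : ℝ → ℝ := fun s => L1 s / (2 * Real.sqrt (ell s)) with hgdef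
  have hf' : ∀ s : ℝ, |s| ≤ ε → HasDerivAt f (g s) s := by
    intro s hs
    have h1 := (Real.hasDerivAt_sqrt (ne_of_gt (hellpos s hs))).comp s (hell' s)
    have h2 : g s = 1 / (2 * Real.sqrt (ell s)) * L1 s := by
      show L1 s / (2 * Real.sqrt (ell s)) = _
      ring
    rw [h2]
    exact h1
  set G : ℝ → ℝ := fun s => (L2 s * (2 * Real.sqrt (ell s)) -
      L1 s * (2 * (1 / (2 * Real.sqrt (ell s)) * L1 s))) / (2 * Real.sqrt (ell s))^2 with hGdef
  have hg' : ∀ s : ℝ, |s| ≤ ε → HasDerivAt g (G s) s := by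
    intro s hs
    have hne : ell s ≠ 0 := ne_of_gt (hellpos s hs)
    have hd : HasDerivAt (fun t => 2 * Real.sqrt (ell t))
        (2 * (1 / (2 * Real.sqrt (ell s)) * L1 s)) s := by
      have := (Real.hasDerivAt_sqrt hne).comp s (hell' s)
      exact this.const_mul 2
    have hdne : 2 * Real.sqrt (ell s) ≠ 0 := by
      have := Real.sqrt_pos.mpr (hellpos s hs)
      positivity
    exact (hL1' s).div hd hdne
  -- bound on G
  set Kb : ℝ := C₄ * ‖p‖^2 / ‖k‖ with hKbdef
  have hKbnn : 0 ≤ Kb := by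
    rw [hKbdef, hC₄def]
    positivity
  have hGbound : ∀ s : ℝ, |s| ≤ ε → |G s| ≤ Kb := by
    intro s hs
    set q := Real.sqrt (ell s) with hq
    have hqpos : 0 < q := Real.sqrt_pos.mpr (hellpos s hs)
    have hqlow : a * ‖k‖ ≤ q := hsqrt s hs
    have hL2b : |L2 s| ≤ M * ‖p‖^2 / 4 := by
      have h1 : |L2 s| ≤ ‖fderiv ℝ (fderiv ℝ lam) (x s)‖ * ‖u‖ * ‖u‖ := by
        calc |L2 s| ≤ ‖fderiv ℝ (fderiv ℝ lam) (x s) u‖ * ‖u‖ :=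
              (fderiv ℝ (fderiv ℝ lam) (x s) u).le_opNorm u
          _ ≤ ‖fderiv ℝ (fderiv ℝ lam) (x s)‖ * ‖u‖ * ‖u‖ := by
              apply mul_le_mul_of_nonneg_right _ (norm_nonneg u)
              exact (fderiv ℝ (fderiv ℝ lam) (x s)).le_opNorm u
      calc |L2 s| ≤ ‖fderiv ℝ (fderiv ℝ lam) (x s)‖ * ‖u‖ * ‖u‖ := h1
        _ ≤ M * (‖p‖/2) * (‖p‖/2) := by
            apply mul_le_mul
            · apply mul_le_mul (hM _ (hball s hs)) (le_of_eq hu) (norm_nonneg u)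
                (le_of_lt hMpos)
            · exact le_of_eq hu
            · exact norm_nonneg u
            · positivity
        _ = M * ‖p‖^2 / 4 := by ring
    have hL1b : |L1 s| ≤ (3/4) * M * ‖k‖ * ‖p‖ := by
      calc |L1 s| ≤ ‖fderiv ℝ lam (x s)‖ * ‖u‖ := (fderiv ℝ lam (x s)).le_opNorm u
        _ ≤ (M * ((3/2)*‖k‖)) * (‖p‖/2) := by
            apply mul_le_mul _ (le_of_eq hu) (norm_nonneg u) (by positivity)
            calc ‖fderiv ℝ lam (x s)‖ ≤ M * ‖x s‖ := hgrad _ (hball s hs)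
              _ ≤ M * ((3/2)*‖k‖) := by
                  apply mul_le_mul_of_nonneg_left (hreg1 s hs).2.1 (le_of_lt hMpos)
        _ = (3/4) * M * ‖k‖ * ‖p‖ := by ring
    have hGeq : G s = L2 s / (2*q) - (L1 s)^2 / (4*q^3) := by
      show (L2 s * (2 * q) - L1 s * (2 * (1 / (2 * q) * L1 s))) / (2 * q)^2 = _
      field_simp
      ring
    have hterm1 : |L2 s| / (2*q) ≤ (M * ‖p‖^2/4) / (2*(a*‖k‖)) := by
      apply div_le_div₀ (by positivity) hL2b (by positivity)
      have : a * ‖k‖ ≤ q := hqlow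
      linarith
    have hterm2 : (L1 s)^2 / (4*q^3) ≤ ((3/4)*M*‖k‖*‖p‖)^2 / (4*(a*‖k‖)^3) := by
      apply div_le_div₀ (by positivity) _ (by positivity)
      · have h1 : (a*‖k‖)^3 ≤ q^3 := by
          apply pow_le_pow_left₀ (by positivity) hqlow
        linarith
      · rw [← sq_abs]
        apply pow_le_pow_left₀ (abs_nonneg _) hL1b
    have htri : |G s| ≤ |L2 s|/(2*q) + (L1 s)^2/(4*q^3) := by
      rw [hGeq]
      have e1 : |L2 s / (2*q)| = |L2 s| / (2*q) := by
        rw [abs_div]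
        congr 1
        exact abs_of_pos (by positivity)
      have e2 : |(L1 s)^2 / (4*q^3)| = (L1 s)^2 / (4*q^3) := abs_of_nonneg (by positivity)
      calc |L2 s / (2*q) - (L1 s)^2/(4*q^3)| ≤ |L2 s/(2*q)| + |(L1 s)^2/(4*q^3)| := abs_sub _ _
        _ = |L2 s|/(2*q) + (L1 s)^2/(4*q^3) := by rw [e1, e2]
    have hfinal : (M * ‖p‖^2/4) / (2*(a*‖k‖)) + ((3/4)*M*‖k‖*‖p‖)^2 / (4*(a*‖k‖)^3) = Kb := by
      rw [hKbdef, hC₄def]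
      field_simp
      ring
    linarith [htri, hterm1, hterm2]
  -- MVT step 1
  have habsmem : ∀ t : ℝ, t ∈ Set.Icc (-ε) ε → |t| ≤ ε := fun t ht => abs_le.mpr ⟨ht.1, ht.2⟩
  have hgK : ∀ s ∈ Set.Icc (-ε) ε, ‖g s - g 0‖ ≤ Kb * ‖s - 0‖ := by
    intro s hs
    have h0mem : (0:ℝ) ∈ Set.Icc (-ε) ε := ⟨by linarith, by linarith⟩
    exact (convex_Icc (-ε) ε).norm_image_sub_le_of_norm_hasDerivWithin_le
      (fun t ht => (hg' t (habsmem t ht)).hasDerivWithinAt)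
      (fun t ht => by rw [Real.norm_eq_abs]; exact hGbound t (habsmem t ht)) h0mem hs
  -- MVT step 2
  set h : ℝ → ℝ := fun s => f s - s * g 0 with hhdef
  have hh' : ∀ s : ℝ, |s| ≤ ε → HasDerivAt h (g s - g 0) s := fun s hs =>
    (hf' s hs).sub (hasDerivAt_mul_const (g 0))
  have h0mem : (0:ℝ) ∈ Set.Icc (-ε) ε := ⟨by linarith, by linarith⟩
  have hmvt2 : ∀ s ∈ Set.Icc (-ε) ε, ‖h s - h 0‖ ≤ (Kb * ε) * ‖s - 0‖ := by
    intro s hs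
    apply (convex_Icc (-ε) ε).norm_image_sub_le_of_norm_hasDerivWithin_le
      (fun t ht => (hh' t (habsmem t ht)).hasDerivWithinAt)
      (fun t ht => ?_) h0mem hs
    rw [Real.norm_eq_abs]
    have h1 := hgK t ht
    rw [Real.norm_eq_abs, Real.norm_eq_abs, sub_zero] at h1
    calc |g t - g 0| ≤ Kb * |t| := h1
      _ ≤ Kb * ε := mul_le_mul_of_nonneg_left (habsmem t ht) hKbnn
  have hεmem : ε ∈ Set.Icc (-ε) ε := ⟨by linarith, le_refl ε⟩
  have hnεmem : -ε ∈ Set.Icc (-ε) ε := ⟨le_refl _, by linarith⟩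
  have hA := hmvt2 ε hεmem
  have hB := hmvt2 (-ε) hnεmem
  rw [Real.norm_eq_abs, Real.norm_eq_abs, sub_zero, abs_of_pos hε] at hA
  rw [Real.norm_eq_abs, Real.norm_eq_abs, sub_zero, abs_neg, abs_of_pos hε] at hB
  -- identify endpoints
  have hx1 : x ε = k + (ε/2) • p := by
    show k + ε • u = _
    rw [hudef, smul_smul]
    congr 1 <;> try ring
  have hx2 : x (-ε) = k - (ε/2) • p := by
    show k + (-ε) • u = _
    rw [hudef, smul_smul]
    rw [sub_eq_add_neg, ← neg_smul]
    congr 1 <;> try ring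
  have hx0 : x 0 = k := by
    show k + (0:ℝ) • u = k
    rw [zero_smul, add_zero]
  -- fderiv of sqrt ∘ lam at k
  have hlamk : 0 < lam k := by
    have h1 := hquad k (fun i => le_trans (hk i) (by norm_num))
    have h2 : 0 < c₁ * ‖k‖^2 := by positivity
    linarith
  have hω' : HasFDerivAt (fun y => Real.sqrt (lam y))
      ((1/(2*Real.sqrt (lam k))) • fderiv ℝ lam k) k :=
    (Real.hasDerivAt_sqrt (ne_of_gt hlamk)).comp_hasFDerivAt k (hdiff k).hasFDerivAt
  have hfd : fderiv ℝ (fun y => Real.sqrt (lam y)) k p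
      = (1/(2*Real.sqrt (lam k))) * (fderiv ℝ lam k p) := by
    rw [hω'.fderiv]
    simp [ContinuousLinearMap.smul_apply, smul_eq_mul]
  have hg0 : g 0 = (2⁻¹ * fderiv ℝ lam k p) / (2 * Real.sqrt (lam k)) := by
    show L1 0 / (2 * Real.sqrt (ell 0)) = _
    have e1 : ell 0 = lam k := by show lam (x 0) = lam k; rw [hx0]
    have e2 : L1 0 = 2⁻¹ * fderiv ℝ lam k p := by
      show fderiv ℝ lam (x 0) u = _
      rw [hx0, hudef, map_smul, smul_eq_mul]
    rw [e1, e2]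
  have hfd2 : fderiv ℝ (fun y => Real.sqrt (lam y)) k p = 2 * g 0 := by
    rw [hfd, hg0]
    have := Real.sqrt_pos.mpr hlamk
    field_simp
  have hfε : Real.sqrt (lam (k + (ε/2) • p)) = f ε := by
    show _ = Real.sqrt (ell ε)
    rw [helldef]
    show _ = Real.sqrt (lam (x ε))
    rw [hx1]
  have hfnε : Real.sqrt (lam (k - (ε/2) • p)) = f (-ε) := by
    show _ = Real.sqrt (ell (-ε))
    rw [helldef]
    show _ = Real.sqrt (lam (x (-ε)))
    rw [hx2]
  show |Real.sqrt (lam (k + (ε/2) • p)) - Real.sqrt (lam (k - (ε/2) • p))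
      - ε * fderiv ℝ (fun y => Real.sqrt (lam y)) k p| ≤ 2*C₄ * ε^2 * ‖p‖^2 / ‖k‖
  rw [hfε, hfnε, hfd2]
  have hid : f ε - f (-ε) - ε * (2 * g 0) = (h ε - h 0) - (h (-ε) - h 0) := by
    show f ε - f (-ε) - ε * (2 * g 0)
      = (f ε - ε * g 0 - (f 0 - 0 * g 0)) - ((f (-ε) - (-ε) * g 0) - (f 0 - 0 * g 0))
    ring
  rw [hid]
  have htr : |(h ε - h 0) - (h (-ε) - h 0)| ≤ |h ε - h 0| + |h (-ε) - h 0| := abs_sub _ _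
  have hrhs : Kb * ε * ε + Kb * ε * ε ≤ 2*C₄ * ε^2 * ‖p‖^2 / ‖k‖ := by
    rw [hKbdef]
    apply le_of_eq
    field_simp
    ring
  linarith [htr, hA, hB]
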